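/- Let G be an extremely amenable topological group. Let V be a set with a G-action all of whose point stabilizers are open, let ι index relations R_V i ⊆ V^(n i) that are G-invariant (R_V i x implies R_V i (g • x) for all g ∈ G), and let D be a finite set with relations R_D i ⊆ D^(n i). If there exists a homomorphism from (V, R_V) to (D, R_D), then there exists a G-equivariant homomorphism h, i.e., one satisfying h(g • v) = h(v) for all g ∈ G and v ∈ V. -/

import Mathlib

universe u v w x

/-- A topological group is extremely amenable if every continuous action of it on a
nonempty compact Hausdorff space has a fixed point. -/
def ExtremelyAmenable (G : Type u) [Group G] [TopologicalSpace G] : Prop :=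
  ∀ (X : Type v) [TopologicalSpace X] [CompactSpace X] [T2Space X] [Nonempty X]
    [MulAction G X], Continuous (fun p : G × X => p.1 • p.2) →
    ∃ x : X, ∀ g : G, g • x = x

theorem stmt_7 {G : Type u} {V : Type v} {D : Type w} {ι : Type x}
    [Group G] [TopologicalSpace G] [IsTopologicalGroup G]
    (hEA : ExtremelyAmenable.{u, max v w} G)
    [MulAction G V] (hstab : ∀ v : V, IsOpen {g : G | g • v = v})
    [Finite D] (n : ι → ℕ)
    (RV : ∀ i, (Fin (n i) → V) → Prop) (RD : ∀ i, (Fin (n i) → D) → Prop)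
    (hinv : ∀ i (x : Fin (n i) → V) (g : G), RV i x → RV i (fun k => g • x k))
    (hsol : ∃ f : V → D, ∀ i (x : Fin (n i) → V), RV i x → RD i (f ∘ x)) :
    ∃ h : V → D, (∀ i (x : Fin (n i) → V), RV i x → RD i (h ∘ x)) ∧
      ∀ (g : G) (v : V), h (g • v) = h v := by
  classical
  letI : TopologicalSpace D := ⊥
  haveI : DiscreteTopology D := ⟨rfl⟩
  obtain ⟨f0, hf0⟩ := hsol
  let X : Type (max v w) := {f : V → D // ∀ i (x : Fin (n i) → V), RV i x → RD i (f ∘ x)}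
  haveI : Nonempty X := ⟨⟨f0, hf0⟩⟩
  -- compactness
  have hclosed : IsClosed {f : V → D | ∀ i (x : Fin (n i) → V), RV i x → RD i (f ∘ x)} := by
    have heq : {f : V → D | ∀ i (x : Fin (n i) → V), RV i x → RD i (f ∘ x)} =
        ⋂ (i) (x : Fin (n i) → V) (_ : RV i x), {f : V → D | RD i (f ∘ x)} := by
      ext f; simp [Set.mem_iInter]
    rw [heq]
    refine isClosed_iInter fun i => isClosed_iInter fun xx => isClosed_iInter fun _ => ?_
    have hc : Continuous fun f : V → D => f ∘ xx := continuous_pi fun k => continuous_apply _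
    exact (isClosed_discrete {y : Fin (n i) → D | RD i y}).preimage hc
  haveI : CompactSpace X := isCompact_iff_compactSpace.mp hclosed.isCompact
  -- the action
  letI : MulAction G X :=
    { smul := fun g f => ⟨fun v => f.val (g⁻¹ • v), fun i xx hx => by
        have h1 := f.2 i (fun k => g⁻¹ • xx k) (hinv i xx g⁻¹ hx)
        exact h1⟩
      one_smul := fun f => Subtype.ext (funext fun v => by
        show f.val ((1 : G)⁻¹ • v) = f.val v
        simp)
      mul_smul := fun g h f => Subtype.ext (funext fun v => by
        show f.val ((g * h)⁻¹ • v) = f.val (h⁻¹ • g⁻¹ • v)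
        rw [mul_inv_rev, mul_smul]) }
  -- continuity of the action
  have hopen1 : ∀ v w : V, IsOpen {g : G | g • v = w} := by
    intro v w
    by_cases he : ∃ g0 : G, g0 • v = w
    · obtain ⟨g0, hg0⟩ := he
      have heq : {g : G | g • v = w} = (fun g : G => g0⁻¹ * g) ⁻¹' {g : G | g • v = v} := by
        ext g
        simp only [Set.mem_setOf_eq, Set.mem_preimage, mul_smul]
        rw [inv_smul_eq_iff, hg0]
      rw [heq]
      exact (hstab v).preimage (continuous_const.mul continuous_id)
    · have heq : {g : G | g • v = w} = ∅ := by
        ext g; simp only [Set.mem_setOf_eq, Set.mem_empty_iff_false, iff_false]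
        exact fun h => he ⟨g, h⟩
      rw [heq]; exact isOpen_empty
  have hopen2 : ∀ v w : V, IsOpen {g : G | g⁻¹ • v = w} := by
    intro v w
    have : {g : G | g⁻¹ • v = w} = (fun g : G => g⁻¹) ⁻¹' {g : G | g • v = w} := rfl
    rw [this]
    exact (hopen1 v w).preimage continuous_inv
  have hcont : Continuous (fun p : G × X => p.1 • p.2) := by
    apply continuous_induced_rng.mpr
    refine continuous_pi fun v => ?_
    have heq : (Subtype.val ∘ fun p : G × X => p.1 • p.2) = fun p : G × X => (p.1 • p.2).val := rfl
    refine continuous_discrete_rng.mpr fun d => ?_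
    have heq2 : (fun p : G × X => (Subtype.val ∘ fun p : G × X => p.1 • p.2) p v) ⁻¹' {d} =
        ⋃ w : V, ({g : G | g⁻¹ • v = w} ×ˢ {f : X | f.val w = d}) := by
      ext ⟨g, f⟩
      simp only [Set.mem_preimage, Set.mem_singleton_iff, Set.mem_iUnion, Set.mem_prod,
        Set.mem_setOf_eq, Function.comp]
      constructor
      · intro h; exact ⟨g⁻¹ • v, rfl, h⟩
      · rintro ⟨w, rfl, h⟩; exact h
    rw [heq2]
    refine isOpen_iUnion fun w => (hopen2 v w).prod ?_
    have : {f : X | f.val w = d} = (fun f : X => f.val w) ⁻¹' {d} := rfl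
    rw [this]
    exact (isOpen_discrete _).preimage ((continuous_apply w).comp continuous_subtype_val)
  obtain ⟨f, hf⟩ := hEA X hcont
  refine ⟨f.val, f.2, fun g v => ?_⟩
  have h2 : f.val (g⁻¹⁻¹ • v) = f.val v := congrArg (fun x : X => x.val v) (hf g⁻¹)
  rwa [inv_inv] at h2
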